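/- Fix a winner number k with 1 ≤ k ≤ n and a Gini cap g ∈ (0,1). The maximum price p*_k(b) is a continuous function of each coordinate b_i of the budget profile (on the domain where it is defined, i.e., where the (n−k+1)-st smallest budget is positive). Consequently, for any finite set K of allowed winner numbers, the Gini mechanism's price p*(b) = max_{k∈K} p*_k(b) is continuous in every coordinate. -/

import Mathlib

open Finset

/-- The ascending rearrangement of a vector. -/
noncomputable def sortedAsc {n : ℕ} (a : Fin n → ℝ) : Fin n → ℝ :=
  a ∘ Tuple.sort a

/-- The Gini index of an ascending-sorted nonnegative vector `y` on `Fin k`: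
`2 (∑ i, i * y_i) / (k ∑ i, y_i) - (k+1)/k` (with 1-based weights). -/
noncomputable def gini {k : ℕ} (y : Fin k → ℝ) : ℝ :=
  2 * (∑ i : Fin k, (((i : ℕ) : ℝ) + 1) * y i) / (k * ∑ i, y i) - ((k : ℝ) + 1) / k

/-- The flexible Gini index with winner number `k`: the Gini index of the top `k`
entries of the ascending rearrangement of the allocation. -/
noncomputable def flexGini {n : ℕ} (k : ℕ) (a : Fin n → ℝ) : ℝ :=
  if h : k ≤ n then
    gini (fun i : Fin k => sortedAsc a ⟨n - k + i, by have := i.isLt; omega⟩)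
  else 0

/-- Feasibility of allocation `a` for budgets `b`, winner number `k`, price `p`. -/
def Feasible {n : ℕ} (b : Fin n → ℝ) (k : ℕ) (p : ℝ) (a : Fin n → ℝ) : Prop :=
  (∀ i, 0 ≤ a i) ∧ (∑ i, a i = 1) ∧ (∀ i, a i * p ≤ b i) ∧
    n - k ≤ (Finset.univ.filter fun i => a i = 0).card

open Classical in
/-- The minimum flexible Gini index over feasible allocations (`1` if none exists). -/
noncomputable def gStar {n : ℕ} (b : Fin n → ℝ) (k : ℕ) (p : ℝ) : ℝ :=
  if ∃ a, Feasible b k p a then sInf (flexGini k '' {a | Feasible b k p a}) else 1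

/-- The maximum price for winner number `k` under Gini cap `g`. -/
noncomputable def pStar {n : ℕ} (b : Fin n → ℝ) (k : ℕ) (g : ℝ) : ℝ :=
  sSup {p : ℝ | 0 < p ∧ gStar b k p ≤ g}

/-- The Gini mechanism's price: the maximum of `pStar` over allowed winner numbers. -/
noncomputable def pStarK {n : ℕ} (b : Fin n → ℝ) (K : Finset ℕ) (g : ℝ) : ℝ :=
  sSup ((fun k => pStar b k g) '' (K : Set ℕ))

/-- The `(m+1)`-st smallest budget (0-based index `m`). -/
noncomputable def nthSmallest {n : ℕ} (b : Fin n → ℝ) (m : ℕ) : ℝ :=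
  if h : m < n then sortedAsc b ⟨m, h⟩ else 0

/-- The allocation cap `C` at price `p` for winner number `k`. -/
noncomputable def capOf {n : ℕ} (b : Fin n → ℝ) (k : ℕ) (p : ℝ) : ℝ :=
  sInf {C : ℝ | 0 < C ∧
    1 ≤ ∑ i ∈ Finset.univ.filter (fun i : Fin n => n - k ≤ (i : ℕ)),
        min (sortedAsc b i / p) C}

/-- The winner number chosen by the Gini mechanism (ties broken in favor of more winners). -/
noncomputable def mechWinnerNum {n : ℕ} (b : Fin n → ℝ) (K : Finset ℕ) (g : ℝ) : ℕ :=
  sSup {k | k ∈ K ∧ pStar b k g = pStarK b K g}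

/-- The allocation of the Gini mechanism: agents in the bottom `n - k` positions (by budget)
receive `0`; the `k` winners receive `min (bᵢ/p, C)` at the mechanism price `p`. -/
noncomputable def mechAlloc {n : ℕ} (b : Fin n → ℝ) (K : Finset ℕ) (g : ℝ) : Fin n → ℝ :=
  fun i =>
    if ((Tuple.sort b).symm i : ℕ) < n - mechWinnerNum b K g then 0
    else min (b i / pStarK b K g) (capOf b (mechWinnerNum b K g) (pStarK b K g))

/-- Agent `i`'s spending under the Gini mechanism. -/
noncomputable def spend {n : ℕ} (b : Fin n → ℝ) (K : Finset ℕ) (g : ℝ) (i : Fin n) : ℝ :=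
  mechAlloc b K g i * pStarK b K g

/-- Agent `i`'s utility under the Gini mechanism when her valuation is `v`. -/
noncomputable def util {n : ℕ} (b : Fin n → ℝ) (K : Finset ℕ) (g : ℝ) (i : Fin n) (v : ℝ) : ℝ :=
  mechAlloc b K g i * (v - pStarK b K g)

lemma gini_bounds {k : ℕ} (y : Fin k → ℝ) (hy : ∀ i, 0 ≤ y i) :
    -2 ≤ gini y ∧ gini y ≤ 1 := by
  unfold gini
  rcases Nat.eq_zero_or_pos k with hk | hk
  · subst hk; norm_num
  have hk1 : (1:ℝ) ≤ (k:ℝ) := by exact_mod_cast hk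
  set N := ∑ i : Fin k, (((i : ℕ) : ℝ) + 1) * y i with hN'
  set S := ∑ i, y i with hS'
  have hN : 0 ≤ N := Finset.sum_nonneg fun i _ => mul_nonneg (by positivity) (hy i)
  have hS : 0 ≤ S := Finset.sum_nonneg fun i _ => hy i
  have hNk : N ≤ k * S := by
    rw [hN', hS', Finset.mul_sum]
    refine Finset.sum_le_sum fun i _ => ?_
    refine mul_le_mul_of_nonneg_right ?_ (hy i)
    exact_mod_cast Nat.succ_le_of_lt i.isLt
  constructor
  · have h1 : 0 ≤ 2 * N / (k * S) := by positivity
    have h2 : ((k:ℝ)+1)/k ≤ 2 := by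
      rw [div_le_iff₀ (by linarith)]; linarith
    linarith
  · have h2 : 1 ≤ ((k:ℝ)+1)/k := by
      rw [le_div_iff₀ (by linarith)]; linarith
    have h1 : 2 * N / (k * S) ≤ 2 := by
      rcases eq_or_lt_of_le hS with h | h
      · rw [← h]; norm_num
      · rw [div_le_iff₀ (by positivity)]; nlinarith
    linarith

lemma flexGini_bounds {n k : ℕ} (a : Fin n → ℝ) (ha : ∀ i, 0 ≤ a i) :
    -2 ≤ flexGini k a ∧ flexGini k a ≤ 1 := by
  unfold flexGini
  split
  · exact gini_bounds _ fun i => ha _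
  · norm_num

lemma feasible_mono {n : ℕ} {b b' : Fin n → ℝ} (h : ∀ j, b j ≤ b' j) {k : ℕ} {p : ℝ}
    {a : Fin n → ℝ} (ha : Feasible b k p a) : Feasible b' k p a :=
  ⟨ha.1, ha.2.1, fun i => (ha.2.2.1 i).trans (h i), ha.2.2.2⟩

lemma gStar_bddBelow {n : ℕ} (b : Fin n → ℝ) (k : ℕ) (p : ℝ) :
    BddBelow (flexGini k '' {a | Feasible b k p a}) := by
  refine ⟨-2, ?_⟩
  rintro _ ⟨a, ha, rfl⟩
  exact (flexGini_bounds a ha.1).1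

lemma gStar_le_flexGini {n : ℕ} {b : Fin n → ℝ} {k : ℕ} {p : ℝ} {a : Fin n → ℝ}
    (ha : Feasible b k p a) : gStar b k p ≤ flexGini k a := by
  unfold gStar
  rw [if_pos ⟨a, ha⟩]
  exact csInf_le (gStar_bddBelow b k p) ⟨a, ha, rfl⟩

lemma gStar_le_one {n : ℕ} (b : Fin n → ℝ) (k : ℕ) (p : ℝ) : gStar b k p ≤ 1 := by
  unfold gStar
  split
  · next h =>
    obtain ⟨a, ha⟩ := h
    exact le_trans (csInf_le (gStar_bddBelow b k p) ⟨a, ha, rfl⟩) (flexGini_bounds a ha.1).2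
  · exact le_refl 1
lemma gStar_anti {n : ℕ} {b b' : Fin n → ℝ} (h : ∀ j, b j ≤ b' j) (k : ℕ) (p : ℝ) :
    gStar b' k p ≤ gStar b k p := by
  by_cases hne : ∃ a, Feasible b k p a
  · obtain ⟨a, ha⟩ := hne
    have h1 : gStar b k p = sInf (flexGini k '' {a | Feasible b k p a}) := by
      unfold gStar; rw [if_pos ⟨a, ha⟩]
    have h2 : gStar b' k p = sInf (flexGini k '' {a | Feasible b' k p a}) := by
      unfold gStar; rw [if_pos ⟨a, feasible_mono h ha⟩]
    rw [h1, h2]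
    exact csInf_le_csInf (gStar_bddBelow b' k p) ⟨flexGini k a, a, ha, rfl⟩
      (Set.image_mono fun x hx => feasible_mono h hx)
  · have h1 : gStar b k p = 1 := by unfold gStar; rw [if_neg hne]
    rw [h1]
    exact gStar_le_one b' k p

lemma price_le_sum {n : ℕ} {b : Fin n → ℝ} {k : ℕ} {p : ℝ} {a : Fin n → ℝ}
    (ha : Feasible b k p a) : p ≤ ∑ j, b j := by
  calc p = ∑ j, a j * p := by rw [← Finset.sum_mul, ha.2.1, one_mul]
  _ ≤ ∑ j, b j := Finset.sum_le_sum fun j _ => ha.2.2.1 j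

lemma pset_bddAbove {n : ℕ} (b : Fin n → ℝ) (k : ℕ) {g : ℝ} (hg : g < 1) :
    BddAbove {p : ℝ | 0 < p ∧ gStar b k p ≤ g} := by
  refine ⟨∑ j, b j, fun p hp => ?_⟩
  obtain ⟨hp0, hpg⟩ := hp
  by_cases hne : ∃ a, Feasible b k p a
  · obtain ⟨a, ha⟩ := hne; exact price_le_sum ha
  · exfalso
    have : gStar b k p = 1 := by unfold gStar; rw [if_neg hne]
    rw [this] at hpg; linarith

lemma pStar_nonneg {n : ℕ} (b : Fin n → ℝ) (k : ℕ) (g : ℝ) : 0 ≤ pStar b k g :=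
  Real.sSup_nonneg fun _ hp => hp.1.le

lemma pStar_mono {n : ℕ} {b b' : Fin n → ℝ} (h : ∀ j, b j ≤ b' j) (k : ℕ) {g : ℝ}
    (hg : g < 1) : pStar b k g ≤ pStar b' k g := by
  unfold pStar
  rcases Set.eq_empty_or_nonempty {p : ℝ | 0 < p ∧ gStar b k p ≤ g} with he | hne
  · rw [he, Real.sSup_empty]
    exact Real.sSup_nonneg fun _ hp => hp.1.le
  · exact csSup_le_csSup (pset_bddAbove b' k hg) hne
      fun p hp => ⟨hp.1, le_trans (gStar_anti h k p) hp.2⟩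

lemma csSup_mul_left {c : ℝ} (hc : 0 < c) (S : Set ℝ) (hbdd : BddAbove S) :
    sSup ((fun x => c * x) '' S) = c * sSup S := by
  rcases S.eq_empty_or_nonempty with he | hne
  · simp [he, Real.sSup_empty]
  · refine IsLUB.csSup_eq ⟨?_, ?_⟩ (hne.image _)
    · rintro _ ⟨x, hx, rfl⟩
      exact mul_le_mul_of_nonneg_left (le_csSup hbdd hx) hc.le
    · intro u hu
      have hcu : c * (u / c) = u := by field_simp
      rw [← hcu]
      refine mul_le_mul_of_nonneg_left (csSup_le hne fun x hx => ?_) hc.le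
      rw [le_div_iff₀ hc, mul_comm]
      exact hu ⟨x, hx, rfl⟩

lemma feasible_smul {n : ℕ} {b : Fin n → ℝ} {k : ℕ} {p c : ℝ} (hc : 0 < c)
    (a : Fin n → ℝ) : Feasible (fun j => c * b j) k (c * p) a ↔ Feasible b k p a := by
  unfold Feasible
  have : (∀ j, a j * (c * p) ≤ c * b j) ↔ ∀ j, a j * p ≤ b j := by
    refine forall_congr' fun j => ?_
    rw [show a j * (c * p) = c * (a j * p) by ring]
    exact mul_le_mul_iff_right₀ hc
  rw [this]

lemma gStar_smul {n : ℕ} (b : Fin n → ℝ) (k : ℕ) {c : ℝ} (hc : 0 < c) (p : ℝ) :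
    gStar (fun j => c * b j) k (c * p) = gStar b k p := by
  unfold gStar
  have hset : {a : Fin n → ℝ | Feasible (fun j => c * b j) k (c * p) a}
      = {a | Feasible b k p a} := Set.ext fun a => feasible_smul hc a
  simp only [hset]
  congr 1
  simp only [eq_iff_iff]
  exact ⟨fun ⟨a, ha⟩ => ⟨a, (feasible_smul hc a).1 ha⟩,
    fun ⟨a, ha⟩ => ⟨a, (feasible_smul hc a).2 ha⟩⟩

lemma pStar_smul {n : ℕ} (b : Fin n → ℝ) (k : ℕ) {c g : ℝ} (hc : 0 < c) (hg : g < 1) :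
    pStar (fun j => c * b j) k g = c * pStar b k g := by
  unfold pStar
  rw [← csSup_mul_left hc _ (pset_bddAbove b k hg)]
  congr 1
  ext p
  constructor
  · rintro ⟨hp0, hpg⟩
    refine ⟨p / c, ⟨div_pos hp0 hc, ?_⟩, by field_simp⟩
    have : c * (p / c) = p := by field_simp
    rw [← gStar_smul b k hc (p / c), this]
    exact hpg
  · rintro ⟨q, ⟨hq0, hqg⟩, rfl⟩
    exact ⟨mul_pos hc hq0, by rw [gStar_smul b k hc q]; exact hqg⟩
lemma flexGini_comp_perm {n k : ℕ} (a : Fin n → ℝ) (σ : Equiv.Perm (Fin n)) :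
    flexGini k (a ∘ σ) = flexGini k a := by
  have h : sortedAsc (a ∘ σ) = sortedAsc a := by
    unfold sortedAsc
    exact Tuple.comp_perm_comp_sort_eq_comp_sort (f := a) (σ := σ)
  unfold flexGini
  split
  · rw [h]
  · rfl

lemma feasible_swap {n : ℕ} {b b' : Fin n → ℝ} {k : ℕ} {p : ℝ} {a : Fin n → ℝ}
    {i j : Fin n} (ha : Feasible b k p a) (haj : a j = 0)
    (hbi : 0 ≤ b' i) (hbj : a i * p ≤ b' j)
    (hoff : ∀ l, l ≠ i → l ≠ j → b l ≤ b' l) :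
    Feasible b' k p (a ∘ (Equiv.swap i j)) := by
  obtain ⟨h1, h2, h3, h4⟩ := ha
  refine ⟨fun l => h1 _, ?_, ?_, ?_⟩
  · rw [show ∑ l, (a ∘ (Equiv.swap i j)) l = ∑ l, a ((Equiv.swap i j) l) from rfl,
      Equiv.sum_comp (Equiv.swap i j) a, h2]
  · intro l
    rcases eq_or_ne l i with rfl | hli
    · simpa only [Function.comp_apply, Equiv.swap_apply_left, haj, zero_mul] using hbi
    · rcases eq_or_ne l j with rfl | hlj
      · simpa only [Function.comp_apply, Equiv.swap_apply_right] using hbj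
      · rw [Function.comp_apply, Equiv.swap_apply_of_ne_of_ne hli hlj]
        exact le_trans (h3 l) (hoff l hli hlj)
  · refine le_trans h4 (le_of_eq ?_)
    exact Finset.card_equiv (Equiv.swap i j) fun l => by simp
lemma exists_swap_index {n k : ℕ} (hk : 1 ≤ k) (hkn : k ≤ n) {b0 a : Fin n → ℝ}
    {i : Fin n} (hi : a i ≠ 0)
    (hz : n - k ≤ (Finset.univ.filter fun l => a l = 0).card)
    (hc : 0 < nthSmallest b0 (n - k)) (hb0i : b0 i = 0) :
    ∃ j, j ≠ i ∧ a j = 0 ∧ nthSmallest b0 (n - k) ≤ b0 j := by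
  classical
  have hnk : n - k < n := by omega
  set σ := Tuple.sort b0 with hσ
  have hcval : nthSmallest b0 (n - k) = b0 (σ ⟨n - k, hnk⟩) := by
    unfold nthSmallest; rw [dif_pos hnk]; rfl
  set T := Finset.image σ (Finset.Ici (⟨n - k, hnk⟩ : Fin n)) with hT
  have hTcard : T.card = k := by
    rw [hT, Finset.card_image_of_injective _ σ.injective, Fin.card_Ici, Fin.val_mk]
    omega
  have hTc : ∀ j ∈ T, nthSmallest b0 (n - k) ≤ b0 j := by
    intro j hj
    rw [hT, Finset.mem_image] at hj
    obtain ⟨l, hl, rfl⟩ := hj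
    rw [Finset.mem_Ici] at hl
    rw [hcval]
    exact Tuple.monotone_sort b0 hl
  have hiT : i ∉ T := by
    intro hiT
    have := hTc i hiT
    rw [hb0i] at this
    linarith
  by_contra hcon
  push_neg at hcon
  have hsub : insert i T ⊆ Finset.univ.filter fun l => ¬ a l = 0 := by
    intro l hl
    rw [Finset.mem_insert] at hl
    simp only [Finset.mem_filter, Finset.mem_univ, true_and]
    rcases hl with rfl | hl
    · exact hi
    · intro hal
      have hne : l ≠ i := fun h => hiT (h ▸ hl)
      exact absurd (hTc l hl) (by simpa using hcon l hne hal)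
  have hcard1 : k + 1 ≤ (Finset.univ.filter fun l => ¬ a l = 0).card := by
    have h := Finset.card_le_card hsub
    rwa [Finset.card_insert_of_notMem hiT, hTcard] at h
  have hcard2 := Finset.card_filter_add_card_filter_not
    (s := (Finset.univ : Finset (Fin n))) (p := fun l : Fin n => a l = 0)
  have hcardn : (Finset.univ : Finset (Fin n)).card = n :=
    Finset.card_univ.trans (Fintype.card_fin n)
  omega

lemma gStar_update_eq {n : ℕ} (b : Fin n → ℝ) (i : Fin n) {k : ℕ} (hk : 1 ≤ k) (hkn : k ≤ n)
    {x : ℝ} (hx0 : 0 ≤ x) (hxc : x ≤ nthSmallest (Function.update b i 0) (n - k)) (p : ℝ) :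
    gStar (Function.update b i x) k p = gStar (Function.update b i 0) k p := by
  classical
  set b0 := Function.update b i 0 with hb0
  set bx := Function.update b i x with hbx
  have hb0i : b0 i = 0 := Function.update_self i 0 b
  have hbxi : bx i = x := Function.update_self i x b
  have hoffeq : ∀ l, l ≠ i → b0 l = bx l := by
    intro l hl
    rw [hb0, hbx, Function.update_of_ne hl, Function.update_of_ne hl]
  have hb0x : ∀ j, b0 j ≤ bx j := by
    intro j
    rcases eq_or_ne j i with rfl | hj
    · rw [hb0i, hbxi]; exact hx0
    · exact le_of_eq (hoffeq j hj)
  have key : ∀ a, Feasible bx k p a →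
      ∃ a', Feasible b0 k p a' ∧ flexGini k a' = flexGini k a := by
    intro a ha
    by_cases hip : a i * p ≤ 0
    · refine ⟨a, ⟨ha.1, ha.2.1, fun l => ?_, ha.2.2.2⟩, rfl⟩
      rcases eq_or_ne l i with rfl | hl
      · rw [hb0i]; exact hip
      · rw [hoffeq l hl]; exact ha.2.2.1 l
    · push_neg at hip
      have hai : a i ≠ 0 := by
        intro h; rw [h, zero_mul] at hip; exact lt_irrefl 0 hip
      have haix : a i * p ≤ x := by
        have := ha.2.2.1 i; rwa [hbxi] at this
      have hxpos : 0 < x := lt_of_lt_of_le hip haix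
      have hcpos : 0 < nthSmallest b0 (n - k) := lt_of_lt_of_le hxpos hxc
      obtain ⟨j, hji, haj, hcj⟩ := exists_swap_index hk hkn hai ha.2.2.2 hcpos hb0i
      refine ⟨a ∘ Equiv.swap i j,
        feasible_swap ha haj (le_of_eq hb0i.symm) (le_trans haix (le_trans hxc hcj)) ?_,
        flexGini_comp_perm a _⟩
      intro l hli _
      exact le_of_eq (hoffeq l hli).symm
  refine le_antisymm (gStar_anti hb0x k p) ?_
  by_cases hne : ∃ a, Feasible bx k p a
  · obtain ⟨a0, ha0⟩ := hne
    have hgx : gStar bx k p = sInf (flexGini k '' {a | Feasible bx k p a}) := by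
      unfold gStar; rw [if_pos ⟨a0, ha0⟩]
    rw [hgx]
    refine le_csInf ⟨_, a0, ha0, rfl⟩ ?_
    rintro _ ⟨a2, ha2, rfl⟩
    obtain ⟨a2', ha2', hf2⟩ := key a2 ha2
    rw [← hf2]
    exact gStar_le_flexGini ha2'
  · have h1 : gStar bx k p = 1 := by unfold gStar; rw [if_neg hne]
    rw [h1]
    exact gStar_le_one b0 k p
lemma pStar_update_eq {n : ℕ} (b : Fin n → ℝ) (i : Fin n) {k : ℕ} (hk : 1 ≤ k) (hkn : k ≤ n)
    {x : ℝ} (hx0 : 0 ≤ x) (hxc : x ≤ nthSmallest (Function.update b i 0) (n - k)) (g : ℝ) :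
    pStar (Function.update b i x) k g = pStar (Function.update b i 0) k g := by
  unfold pStar
  congr 1
  ext p
  simp only [Set.mem_setOf_eq, gStar_update_eq b i hk hkn hx0 hxc p]
/-- The maximum price `p*_k(b)` is continuous in each coordinate `bᵢ` on the
domain where it is defined (where the `(n-k+1)`-st smallest budget is positive); consequently
the Gini mechanism's price `p*(b) = max_{k ∈ K} p*_k(b)` is continuous in every coordinate. -/
theorem pStar_continuous {n : ℕ} (g : ℝ) (hg : g ∈ Set.Ioo (0 : ℝ) 1)
    (b : Fin n → ℝ) (hnn : ∀ j, 0 ≤ b j) (i : Fin n) :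
    (∀ k : ℕ, 1 ≤ k → k ≤ n →
      ContinuousOn (fun x : ℝ => pStar (Function.update b i x) k g)
        {x : ℝ | 0 ≤ x ∧ 0 < nthSmallest (Function.update b i x) (n - k)}) ∧
      ∀ K : Finset ℕ, K.Nonempty → (∀ k ∈ K, 1 ≤ k ∧ k ≤ n) →
        ContinuousOn (fun x : ℝ => pStarK (Function.update b i x) K g)
          {x : ℝ | 0 ≤ x ∧ ∀ k ∈ K, 0 < nthSmallest (Function.update b i x) (n - k)} := by
  obtain ⟨hg0, hg1⟩ := hg
  -- continuity within any subset of [0, ∞)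
  have main : ∀ k : ℕ, 1 ≤ k → k ≤ n → ∀ S : Set ℝ, (∀ x ∈ S, 0 ≤ x) →
      (0 ∈ S → 0 < nthSmallest (Function.update b i 0) (n - k)) →
      ContinuousOn (fun x : ℝ => pStar (Function.update b i x) k g) S := by
    intro k hk hkn S hS0 hSc
    intro x₀ hx₀
    rcases eq_or_lt_of_le (hS0 x₀ hx₀) with h0 | hpos
    · -- x₀ = 0 : locally constant
      subst h0
      have hc : 0 < nthSmallest (Function.update b i 0) (n - k) := hSc hx₀
      have hconst : ContinuousWithinAt
          (fun _ : ℝ => pStar (Function.update b i 0) k g) S 0 := continuousWithinAt_const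
      refine hconst.congr_of_eventuallyEq ?_ rfl
      rw [Filter.eventuallyEq_iff_exists_mem]
      refine ⟨Metric.ball 0 (nthSmallest (Function.update b i 0) (n - k)) ∩ S, ?_, ?_⟩
      · exact Filter.inter_mem (nhdsWithin_le_nhds (Metric.ball_mem_nhds 0 hc))
          self_mem_nhdsWithin
      · rintro x ⟨hxb, hxS⟩
        have hx0 : 0 ≤ x := hS0 x hxS
        have hxlt : x < nthSmallest (Function.update b i 0) (n - k) := by
          have := Metric.mem_ball.1 hxb
          rw [Real.dist_eq, sub_zero] at this
          exact lt_of_le_of_lt (le_abs_self x) this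
        exact pStar_update_eq b i hk hkn hx0 hxlt.le g
    · -- x₀ > 0 : sandwich by scaling
      set F := pStar (Function.update b i x₀) k g with hF
      have hF0 : 0 ≤ F := pStar_nonneg _ _ _
      rw [ContinuousWithinAt, Metric.tendsto_nhdsWithin_nhds]
      intro ε hε
      set μ := min 1 (ε / (2 * (F + 1))) with hμ
      have hμ0 : 0 < μ := lt_min one_pos (by positivity)
      have hμ1 : μ ≤ 1 := min_le_left _ _
      have hμε : μ * (2 * (F + 1)) ≤ ε := by
        have h := min_le_right 1 (ε / (2 * (F + 1)))
        calc μ * (2 * (F + 1)) ≤ ε / (2 * (F + 1)) * (2 * (F + 1)) := by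
              apply mul_le_mul_of_nonneg_right h; positivity
        _ = ε := by field_simp
      refine ⟨x₀ * μ / 2, by positivity, ?_⟩
      intro x hxS hdist
      have hx0 : 0 ≤ x := hS0 x hxS
      rw [Real.dist_eq] at hdist
      have habs := abs_lt.1 hdist
      have hxu : x ≤ (1 + μ) * x₀ := by nlinarith [habs.2]
      have hxl : x₀ ≤ (1 + μ) * x := by nlinarith [habs.1]
      -- upper bound
      have h1 : pStar (Function.update b i x) k g ≤ (1 + μ) * F := by
        have hle : ∀ j, Function.update b i x j ≤
            (fun j => (1 + μ) * Function.update b i x₀ j) j := by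
          intro j
          rcases eq_or_ne j i with rfl | hj
          · simpa [Function.update_self] using hxu
          · simp only [Function.update_of_ne hj]
            nlinarith [hnn j]
        calc pStar (Function.update b i x) k g
            ≤ pStar (fun j => (1 + μ) * Function.update b i x₀ j) k g :=
              pStar_mono hle k hg1
        _ = (1 + μ) * F := pStar_smul _ k (by linarith) hg1
      -- lower bound
      have h2 : F ≤ (1 + μ) * pStar (Function.update b i x) k g := by
        have hle : ∀ j, Function.update b i x₀ j ≤
            (fun j => (1 + μ) * Function.update b i x j) j := by
          intro j
          rcases eq_or_ne j i with rfl | hj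
          · simpa [Function.update_self] using hxl
          · simp only [Function.update_of_ne hj]
            nlinarith [hnn j]
        calc F ≤ pStar (fun j => (1 + μ) * Function.update b i x j) k g :=
              pStar_mono hle k hg1
        _ = (1 + μ) * pStar (Function.update b i x) k g :=
              pStar_smul _ k (by linarith) hg1
      set Fx := pStar (Function.update b i x) k g with hFx
      have hFx0 : 0 ≤ Fx := pStar_nonneg _ _ _
      rw [Real.dist_eq, abs_lt]
      rw [← hF]
      constructor
      · -- -ε < Fx - F, i.e. F - Fx < ε
        have ha1 : F - Fx ≤ μ * Fx := by nlinarith [h2]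
        have ha2 : μ * Fx ≤ μ * ((1 + μ) * F) :=
          mul_le_mul_of_nonneg_left h1 hμ0.le
        have ha3 : μ * ((1 + μ) * F) ≤ μ * (2 * F) := by
          nlinarith [mul_nonneg (mul_nonneg hμ0.le hF0) (sub_nonneg.2 hμ1)]
        linarith [ha1, ha2, ha3, hμε, hμ0]
      · -- Fx - F < ε
        have ha1 : Fx - F ≤ μ * F := by nlinarith [h1]
        linarith [ha1, hμε, hμ0, mul_nonneg hμ0.le hF0]
  have part1 : ∀ k : ℕ, 1 ≤ k → k ≤ n →
      ContinuousOn (fun x : ℝ => pStar (Function.update b i x) k g)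
        {x : ℝ | 0 ≤ x ∧ 0 < nthSmallest (Function.update b i x) (n - k)} := by
    intro k hk hkn
    refine main k hk hkn _ (fun x hx => hx.1) (fun h0 => ?_)
    exact h0.2
  refine ⟨part1, ?_⟩
  intro K hK hKcond
  set S₂ := {x : ℝ | 0 ≤ x ∧ ∀ k ∈ K, 0 < nthSmallest (Function.update b i x) (n - k)} with hS₂
  have hsup : ∀ K' : Finset ℕ, (hK' : K'.Nonempty) → K' ⊆ K →
      ContinuousOn (fun x : ℝ => K'.sup' hK' (fun k => pStar (Function.update b i x) k g)) S₂ := by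
    intro K' hK'
    induction hK' using Finset.Nonempty.cons_induction with
    | singleton k =>
      intro hsub
      have hkK : k ∈ K := hsub (Finset.mem_singleton_self k)
      simp only [Finset.sup'_singleton]
      refine main k (hKcond k hkK).1 (hKcond k hkK).2 S₂ (fun x hx => hx.1) (fun h0 => ?_)
      exact h0.2 k hkK
    | cons k K'' hkK'' hK'' ih =>
      intro hsub
      have hkK : k ∈ K := hsub (Finset.mem_cons_self k K'')
      have hsub' : K'' ⊆ K := fun l hl => hsub (Finset.mem_cons.2 (Or.inr hl))
      have heq : ∀ x : ℝ, (Finset.cons k K'' hkK'').sup'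
          (Finset.cons_nonempty hkK'') (fun l => pStar (Function.update b i x) l g)
          = pStar (Function.update b i x) k g
              ⊔ (K''.sup' hK'' fun l => pStar (Function.update b i x) l g) := by
        intro x
        rw [Finset.sup'_cons (H := hK'')]
      have hmain : ContinuousOn (fun x : ℝ => pStar (Function.update b i x) k g) S₂ :=
        main k (hKcond k hkK).1 (hKcond k hkK).2 S₂ (fun x hx => hx.1)
          (fun h0 => h0.2 k hkK)
      have hcont : ContinuousOn (fun x : ℝ =>
          pStar (Function.update b i x) k g
            ⊔ (K''.sup' hK'' fun l => pStar (Function.update b i x) l g)) S₂ :=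
        ContinuousOn.sup hmain (ih hsub')
      exact hcont.congr fun x _ => heq x
  have hrw : ∀ x : ℝ, pStarK (Function.update b i x) K g
      = K.sup' hK (fun k => pStar (Function.update b i x) k g) := by
    intro x
    unfold pStarK
    rw [Finset.sup'_eq_csSup_image]
  exact (hsup K hK (subset_refl K)).congr fun x _ => hrw x
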